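/- Let ζ ∈ (0, ζ₀). For all l, m ∈ ℕ with l ≠ m, the sets 𝒵_l and 𝒵_m are disjoint: 𝒵_l ∩ 𝒵_m = ∅. -/

import Mathlib

/-- The pair `(P_n, Q_n)` of polynomials defined by `P_0 = Q_0 = 1`,
`P_{n+1} = (ζ Q_n + X P_n)²`, `Q_{n+1} = (Q_n + ζ X P_n)²`. -/
noncomputable def PQ (ζ : ℝ) : ℕ → Polynomial ℂ × Polynomial ℂ
  | 0 => (1, 1)
  | n + 1 =>
    (((ζ : ℂ) • (PQ ζ n).2 + Polynomial.X * (PQ ζ n).1) ^ 2,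
     ((PQ ζ n).2 + (ζ : ℂ) • (Polynomial.X * (PQ ζ n).1)) ^ 2)

noncomputable def Ppoly (ζ : ℝ) (n : ℕ) : Polynomial ℂ := (PQ ζ n).1

noncomputable def Qpoly (ζ : ℝ) (n : ℕ) : Polynomial ℂ := (PQ ζ n).2

/-- `R_n = ζ·X·P_n + Q_n`. -/
noncomputable def Rpoly (ζ : ℝ) (n : ℕ) : Polynomial ℂ :=
  (ζ : ℂ) • (Polynomial.X * Ppoly ζ n) + Qpoly ζ n

/-- `𝒵_n`, the set of complex roots of `R_n`. -/
def Zset (ζ : ℝ) (n : ℕ) : Set ℂ := {z : ℂ | (Rpoly ζ n).eval z = 0}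

/-- `𝒵 = ⋃ₙ 𝒵_n`. -/
def ZsetAll (ζ : ℝ) : Set ℂ := ⋃ n : ℕ, Zset ζ n

/-! ### Auxiliary lemmas -/

lemma Zaux.evalP0 (ζ : ℝ) (z : ℂ) : (Ppoly ζ 0).eval z = 1 := by simp [Ppoly, PQ]
lemma Zaux.evalQ0 (ζ : ℝ) (z : ℂ) : (Qpoly ζ 0).eval z = 1 := by simp [Qpoly, PQ]

lemma Zaux.evalP (ζ : ℝ) (z : ℂ) (k : ℕ) :
    (Ppoly ζ (k+1)).eval z
      = ((ζ:ℂ) * (Qpoly ζ k).eval z + z * (Ppoly ζ k).eval z)^2 := by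
  simp [Ppoly, Qpoly, PQ, smul_eq_mul]

lemma Zaux.evalQ (ζ : ℝ) (z : ℂ) (k : ℕ) :
    (Qpoly ζ (k+1)).eval z
      = ((Qpoly ζ k).eval z + (ζ:ℂ) * (z * (Ppoly ζ k).eval z))^2 := by
  simp [Ppoly, Qpoly, PQ, smul_eq_mul]

lemma Zaux.evalR (ζ : ℝ) (z : ℂ) (k : ℕ) :
    (Rpoly ζ k).eval z
      = (ζ:ℂ) * (z * (Ppoly ζ k).eval z) + (Qpoly ζ k).eval z := by
  simp [Rpoly, smul_eq_mul]

lemma Zaux.normSq_expand (ζ : ℝ) (q b : ℂ) :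
    Complex.normSq (q + (ζ:ℂ)*b)
      = ‖q‖ ^ 2 + ζ^2 * ‖b‖ ^2 + 2*ζ*(q * starRingEnd ℂ b).re := by
  rw [Complex.normSq_add]
  simp [Complex.normSq_mul, Complex.sq_norm, Complex.normSq_ofReal, map_mul,
    Complex.conj_ofReal]
  ring_nf

lemma Zaux.normSq_expand' (ζ : ℝ) (q b : ℂ) :
    Complex.normSq ((ζ:ℂ)*q + b)
      = ζ^2 * ‖q‖ ^ 2 + ‖b‖ ^2 + 2*ζ*(q * starRingEnd ℂ b).re := by
  rw [Complex.normSq_add]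
  simp [Complex.normSq_mul, Complex.sq_norm, Complex.normSq_ofReal, map_mul,
    Complex.conj_ofReal]
  ring_nf

lemma Zaux.key0 (ζ : ℝ) (hζ0 : 0 ≤ ζ) (hζ1 : ζ ≤ 1) (q b : ℂ)
    (h : ‖b‖ ≤ ‖q‖) :
    Complex.normSq ((ζ:ℂ)*q + b) ≤ Complex.normSq (q + (ζ:ℂ)*b) := by
  rw [Zaux.normSq_expand, Zaux.normSq_expand']
  have hu : 0 ≤ ‖b‖ := norm_nonneg _
  nlinarith [mul_self_le_mul_self hu h, mul_self_le_mul_self hζ0 hζ1]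

lemma Zaux.key1 (ζ : ℝ) (hζ0 : 0 < ζ) (hζ1 : ζ < 1) (q b : ℂ)
    (h : ‖q‖ ≤ ‖b‖) :
    Complex.normSq (q + (ζ:ℂ)*b) * (‖b‖ + ζ*‖q‖)^2 ≤
    Complex.normSq ((ζ:ℂ)*q + b) * (‖q‖ + ζ*‖b‖)^2 := by
  have hu : 0 ≤ ‖q‖ := norm_nonneg _
  have hX : (q * starRingEnd ℂ b).re ≤ ‖q‖ * ‖b‖ := by
    calc (q * starRingEnd ℂ b).re ≤ ‖q * starRingEnd ℂ b‖ :=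
          Complex.re_le_norm _
    _ = ‖q‖ * ‖b‖ := by rw [norm_mul, Complex.norm_conj]
  rw [Zaux.normSq_expand, Zaux.normSq_expand']
  nlinarith [mul_nonneg (mul_nonneg (mul_nonneg hζ0.le
      (sub_nonneg.2 (mul_self_le_mul_self hu h)))
      (sub_nonneg.2 hX)) (sub_nonneg.2 hζ1.le)]

lemma Zaux.key2 (ζ u w : ℝ) (hζ0 : 0 < ζ) (hζ1 : ζ < 1) (h4 : 4*ζ ≤ (1+ζ^2)^2)
    (hu : 0 ≤ u) (hw : 0 ≤ w) (h : u ≤ ζ*w) : (u+ζ*w)^2 ≤ ζ*(w+ζ*u)^2 := by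
  have he : 0 ≤ ζ*w - u := sub_nonneg.2 h
  have h1 : 0 ≤ ((1+ζ^2)^2 - 4*ζ) * (ζ*w^2) :=
    mul_nonneg (sub_nonneg.2 h4) (mul_nonneg hζ0.le (sq_nonneg w))
  have h2 : 0 ≤ u * (ζ*w - u) * (1 - ζ^3) := by
    apply mul_nonneg (mul_nonneg hu he)
    nlinarith [pow_lt_one₀ hζ0.le hζ1 (by norm_num : 3 ≠ 0)]
  have h3 : 0 ≤ (ζ*(1-ζ)*(3+ζ+ζ^2)) * (w*(ζ*w-u)) := by
    apply mul_nonneg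
    · apply mul_nonneg (mul_nonneg hζ0.le (by linarith))
      nlinarith
    · exact mul_nonneg hw he
  nlinarith [h1, h2, h3]

lemma Zaux.hfour (s₀ : ℝ) (hs₀0 : 0 < s₀) (hs₀1 : s₀ < 1)
    (hs₀ : s₀ ^ 3 + s₀ ^ 2 + s₀ - 1 = 0)
    (ζ : ℝ) (hζ0 : 0 < ζ) (hζ : ζ < s₀ ^ 2) : 4*ζ < (1+ζ^2)^2 := by
  have hs6 : s₀ < 3/5 := by nlinarith
  have h2s : 2*s₀ = 1 + s₀^4 := by linear_combination (1 - s₀) * hs₀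
  have hsq : (1+s₀^4)^2 = 4*s₀^2 := by nlinarith [h2s]
  have hgap : 0 < s₀^2 - ζ := by linarith
  have hss : s₀^2 < 9/25 := by nlinarith
  have hz2 : ζ < 9/25 := by linarith
  have hs4 : s₀^4 < 81/625 := by nlinarith
  have hzz : ζ^2 < 81/625 := by nlinarith
  have hfac : 0 < 4 - (ζ+s₀^2)*(2+ζ^2+s₀^4) := by nlinarith
  nlinarith [mul_pos hgap hfac, hsq]

/-- In the closed unit disk the ratio `|z·P_k| / |Q_k|` stays `≤ 1` and `Q_k ≠ 0`. -/
lemma Zaux.lowzone (ζ : ℝ) (hζ0 : 0 < ζ) (hζ1 : ζ < 1) (z : ℂ)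
    (hz : ‖z‖ ≤ 1) (k : ℕ) :
    ‖z * (Ppoly ζ k).eval z‖ ≤ ‖(Qpoly ζ k).eval z‖
      ∧ (Qpoly ζ k).eval z ≠ 0 := by
  induction k with
  | zero =>
    rw [Zaux.evalP0, Zaux.evalQ0]
    simpa using hz
  | succ k ih =>
    obtain ⟨hb, hq⟩ := ih
    set q := (Qpoly ζ k).eval z with hqdef
    set b := z * (Ppoly ζ k).eval z with hbdef
    have hqpos : 0 < ‖q‖ := by
      simpa [norm_pos_iff] using hq
    have hne : q + (ζ:ℂ)*b ≠ 0 := by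
      intro h0
      have hqe : q = -((ζ:ℂ)*b) := by linear_combination h0
      have : ‖q‖ = ζ * ‖b‖ := by
        rw [hqe, norm_neg, norm_mul, Complex.norm_real, Real.norm_eq_abs, abs_of_pos hζ0]
      nlinarith
    constructor
    · have h1 : ‖z * (Ppoly ζ (k+1)).eval z‖
          = ‖z‖ * Complex.normSq ((ζ:ℂ)*q + b) := by
        rw [Zaux.evalP, norm_mul, norm_pow, Complex.sq_norm]
      have h2 : ‖(Qpoly ζ (k+1)).eval z‖
          = Complex.normSq (q + (ζ:ℂ)*b) := by
        rw [Zaux.evalQ, norm_pow, Complex.sq_norm]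
      rw [h1, h2]
      calc ‖z‖ * Complex.normSq ((ζ:ℂ)*q + b)
          ≤ 1 * Complex.normSq ((ζ:ℂ)*q + b) :=
            mul_le_mul_of_nonneg_right hz (Complex.normSq_nonneg _)
        _ = Complex.normSq ((ζ:ℂ)*q + b) := one_mul _
        _ ≤ Complex.normSq (q + (ζ:ℂ)*b) := Zaux.key0 ζ hζ0.le hζ1.le q b hb
    · rw [Zaux.evalQ]
      exact pow_ne_zero _ hne

/-- Every zero of `R_k` lies strictly outside the closed unit disk. -/
lemma Zaux.abs_gt_one (ζ : ℝ) (hζ0 : 0 < ζ) (hζ1 : ζ < 1) (z : ℂ) (k : ℕ)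
    (hz : (Rpoly ζ k).eval z = 0) : 1 < ‖z‖ := by
  by_contra hle
  push_neg at hle
  obtain ⟨hb, hq⟩ := Zaux.lowzone ζ hζ0 hζ1 z hle k
  rw [Zaux.evalR] at hz
  have hqe : (Qpoly ζ k).eval z = -((ζ:ℂ) * (z * (Ppoly ζ k).eval z)) := by
    linear_combination hz
  have hqpos : 0 < ‖(Qpoly ζ k).eval z‖ := by
    simpa [norm_pos_iff] using hq
  have : ‖(Qpoly ζ k).eval z‖
      = ζ * ‖z * (Ppoly ζ k).eval z‖ := by
    rw [hqe, norm_neg, norm_mul, Complex.norm_real, Real.norm_eq_abs, abs_of_pos hζ0]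
  nlinarith

/-- `P_k` and `Q_k` have no common zero away from `0`. -/
lemma Zaux.nocommon (ζ : ℝ) (hζ0 : 0 < ζ) (hζ1 : ζ < 1) (z : ℂ) (hz0 : z ≠ 0) :
    ∀ k, ¬ ((Ppoly ζ k).eval z = 0 ∧ (Qpoly ζ k).eval z = 0) := by
  intro k
  induction k with
  | zero => rw [Zaux.evalP0, Zaux.evalQ0]; simp
  | succ k ih =>
    rintro ⟨hp, hq⟩
    rw [Zaux.evalP] at hp
    rw [Zaux.evalQ] at hq
    have hp' : (ζ:ℂ) * (Qpoly ζ k).eval z + z * (Ppoly ζ k).eval z = 0 :=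
      (pow_eq_zero_iff two_ne_zero).mp hp
    have hq' : (Qpoly ζ k).eval z + (ζ:ℂ) * (z * (Ppoly ζ k).eval z) = 0 :=
      (pow_eq_zero_iff two_ne_zero).mp hq
    have hzeta : ((1:ℂ) - (ζ:ℂ)^2) ≠ 0 := by
      intro h
      have : ((1 - ζ^2 : ℝ) : ℂ) = 0 := by push_cast; linear_combination h
      rw [Complex.ofReal_eq_zero] at this
      nlinarith
    have hQ : (Qpoly ζ k).eval z = 0 := by
      have : ((1:ℂ) - (ζ:ℂ)^2) * (Qpoly ζ k).eval z = 0 := by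
        linear_combination hq' - (ζ:ℂ) * hp'
      exact (mul_eq_zero.mp this).resolve_left hzeta
    have hP : (Ppoly ζ k).eval z = 0 := by
      have hzp : z * (Ppoly ζ k).eval z = 0 := by
        have := hp'
        rw [hQ] at this
        simpa using this
      exact (mul_eq_zero.mp hzp).resolve_left hz0
    exact ih ⟨hP, hQ⟩

/-- Main step: a common zero of `R_l` and `R_m` with `l < m` is impossible. -/
lemma Zaux.main (ζ : ℝ) (hζ0 : 0 < ζ) (hζ1 : ζ < 1) (h4 : 4*ζ < (1+ζ^2)^2)
    (z : ℂ) (l m : ℕ) (hlm : l < m)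
    (hl : (Rpoly ζ l).eval z = 0) (hm : (Rpoly ζ m).eval z = 0) : False := by
  have hz1 : 1 < ‖z‖ := Zaux.abs_gt_one ζ hζ0 hζ1 z l hl
  have hz0 : z ≠ 0 := by
    intro h; rw [h] at hz1; simp at hz1; linarith
  rw [Zaux.evalR] at hl
  have hql : (Qpoly ζ l).eval z = -((ζ:ℂ) * (z * (Ppoly ζ l).eval z)) := by
    linear_combination hl
  have hpl : (Ppoly ζ l).eval z ≠ 0 := by
    intro h
    exact Zaux.nocommon ζ hζ0 hζ1 z hz0 l ⟨h, by rw [hql, h]; ring⟩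
  have hzeta : ((1:ℂ) - (ζ:ℂ)^2) ≠ 0 := by
    intro h
    have : ((1 - ζ^2 : ℝ) : ℂ) = 0 := by push_cast; linear_combination h
    rw [Complex.ofReal_eq_zero] at this
    nlinarith
  have hq1 : (Qpoly ζ (l+1)).eval z = 0 := by
    rw [Zaux.evalQ, hql]; ring
  have hp1 : (Ppoly ζ (l+1)).eval z ≠ 0 := by
    have hval : (Ppoly ζ (l+1)).eval z
        = (((1:ℂ) - (ζ:ℂ)^2) * (z * (Ppoly ζ l).eval z))^2 := by
      rw [Zaux.evalP, hql]; ring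
    rw [hval]
    exact pow_ne_zero _ (mul_ne_zero hzeta (mul_ne_zero hz0 hpl))
  have hζC : (ζ:ℂ) ≠ 0 := by
    simpa [Complex.ofReal_eq_zero] using hζ0.ne'
  rcases (by omega : m = l + 1 ∨ l + 2 ≤ m) with hcase | hcase
  · -- m = l+1
    subst hcase
    rw [Zaux.evalR, hq1, add_zero] at hm
    exact (mul_ne_zero hζC (mul_ne_zero hz0 hp1)) hm
  · -- m ≥ l+2 : invariant |Q_j| < ζ |z P_j|, P_j ≠ 0 for j ≥ l+2
    set c := ‖z * (Ppoly ζ (l+1)).eval z‖ with hcdef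
    have hcpos : 0 < c := norm_pos_iff.mpr (mul_ne_zero hz0 hp1)
    have hInv : ∀ j, l + 2 ≤ j → (Ppoly ζ j).eval z ≠ 0 ∧
        ‖(Qpoly ζ j).eval z‖
          < ζ * ‖z * (Ppoly ζ j).eval z‖ := by
      intro j hj
      induction j, hj using Nat.le_induction with
      | base =>
        have hp2 : (Ppoly ζ (l+2)).eval z = (z * (Ppoly ζ (l+1)).eval z)^2 := by
          rw [Zaux.evalP, hq1]; ring
        have hq2 : (Qpoly ζ (l+2)).eval z
            = ((ζ:ℂ) * (z * (Ppoly ζ (l+1)).eval z))^2 := by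
          rw [Zaux.evalQ, hq1]; ring
        constructor
        · rw [hp2]
          exact pow_ne_zero _ (mul_ne_zero hz0 hp1)
        · have e1 : ‖(Qpoly ζ (l+2)).eval z‖ = ζ^2 * c^2 := by
            rw [hq2, norm_pow, norm_mul, Complex.norm_real, Real.norm_eq_abs, abs_of_pos hζ0]
            ring
          have e2 : ‖z * (Ppoly ζ (l+2)).eval z‖
              = ‖z‖ * c^2 := by
            rw [hp2, norm_mul, norm_pow]
          rw [e1, e2]
          have : ζ^2 < ζ * ‖z‖ := by nlinarith
          nlinarith [mul_pos (sub_pos.2 this) (pow_pos hcpos 2)]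
      | succ j hj ihj =>
        obtain ⟨hpj, hqj⟩ := ihj
        set q := (Qpoly ζ j).eval z with hqdef
        set b := z * (Ppoly ζ j).eval z with hbdef
        have hbne : b ≠ 0 := mul_ne_zero hz0 hpj
        have hwpos : 0 < ‖b‖ := by
          simpa [norm_pos_iff] using hbne
        have hunn : 0 ≤ ‖q‖ := norm_nonneg _
        have huw : ‖q‖ ≤ ζ * ‖b‖ := hqj.le
        have hune : (ζ:ℂ)*q + b ≠ 0 := by
          intro h0
          have hbe : b = -((ζ:ℂ)*q) := by linear_combination h0
          have : ‖b‖ = ζ * ‖q‖ := by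
            rw [hbe, norm_neg, norm_mul, Complex.norm_real, Real.norm_eq_abs, abs_of_pos hζ0]
          nlinarith
        have hBpos : 0 < Complex.normSq ((ζ:ℂ)*q + b) := Complex.normSq_pos.2 hune
        have hAB : Complex.normSq (q + (ζ:ℂ)*b)
            ≤ ζ * Complex.normSq ((ζ:ℂ)*q + b) := by
          have k1 := Zaux.key1 ζ hζ0 hζ1 q b (by nlinarith)
          have k2 := Zaux.key2 ζ (‖q‖) (‖b‖) hζ0 hζ1 h4.le
            hunn hwpos.le huw
          have k3 : Complex.normSq ((ζ:ℂ)*q + b) * (‖q‖ + ζ*‖b‖)^2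
              ≤ Complex.normSq ((ζ:ℂ)*q + b) * (ζ*(‖b‖ + ζ*‖q‖)^2) :=
            mul_le_mul_of_nonneg_left k2 hBpos.le
          have hpos : 0 < (‖b‖ + ζ*‖q‖)^2 := by positivity
          have := le_trans k1 k3
          nlinarith [this, hpos]
        constructor
        · rw [Zaux.evalP]
          exact pow_ne_zero _ hune
        · have e1 : ‖(Qpoly ζ (j+1)).eval z‖
              = Complex.normSq (q + (ζ:ℂ)*b) := by
            rw [Zaux.evalQ, norm_pow, Complex.sq_norm]
          have e2 : ‖z * (Ppoly ζ (j+1)).eval z‖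
              = ‖z‖ * Complex.normSq ((ζ:ℂ)*q + b) := by
            rw [Zaux.evalP, norm_mul, norm_pow, Complex.sq_norm]
          rw [e1, e2]
          have : ζ * Complex.normSq ((ζ:ℂ)*q + b)
              < ζ * (‖z‖ * Complex.normSq ((ζ:ℂ)*q + b)) := by
            nlinarith [mul_pos (mul_pos hζ0 (sub_pos.2 hz1)) hBpos]
          linarith [hAB, this]
    obtain ⟨hpm, hqm⟩ := hInv m hcase
    rw [Zaux.evalR] at hm
    have hqe : (Qpoly ζ m).eval z = -((ζ:ℂ) * (z * (Ppoly ζ m).eval z)) := by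
      linear_combination hm
    have : ‖(Qpoly ζ m).eval z‖
        = ζ * ‖z * (Ppoly ζ m).eval z‖ := by
      rw [hqe, norm_neg, norm_mul, Complex.norm_real, Real.norm_eq_abs, abs_of_pos hζ0]
    linarith [hqm, this.ge, this.le]

/-- For `ζ ∈ (0, ζ₀)` (with `ζ₀ = s₀²`, `s₀` the real root of `s³ + s² + s − 1 = 0` in
`(0,1)`), the root sets `𝒵_l` and `𝒵_m` are disjoint whenever `l ≠ m`. -/
theorem stmt14 (s₀ : ℝ) (hs₀0 : 0 < s₀) (hs₀1 : s₀ < 1)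
    (hs₀ : s₀ ^ 3 + s₀ ^ 2 + s₀ - 1 = 0)
    (ζ : ℝ) (hζ0 : 0 < ζ) (hζ : ζ < s₀ ^ 2)
    (l m : ℕ) (hlm : l ≠ m) :
    Zset ζ l ∩ Zset ζ m = ∅ := by
  have hζ1 : ζ < 1 := by nlinarith
  have h4 : 4*ζ < (1+ζ^2)^2 := Zaux.hfour s₀ hs₀0 hs₀1 hs₀ ζ hζ0 hζ
  rw [Set.eq_empty_iff_forall_notMem]
  rintro z ⟨hzl, hzm⟩
  have hl : (Rpoly ζ l).eval z = 0 := hzl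
  have hm : (Rpoly ζ m).eval z = 0 := hzm
  rcases lt_or_gt_of_ne hlm with h | h
  · exact Zaux.main ζ hζ0 hζ1 h4 z l m h hl hm
  · exact Zaux.main ζ hζ0 hζ1 h4 z m l h hm hl
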